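/- arXiv:1402.7289 — 8 statements merged into one kernel-verified Lean document; each statement's English description precedes it below -/
import Mathlib

section
/- Let n ≥ 1 and let S be a subsemigroup of T_n consisting only of nonpermutational transformations; for i ∈ {1,…,n} let S_i = {f ∈ S : the unique fixed point of f is i}. Suppose that for all i < j and k < ℓ with i ≠ k there exists f ∈ S_n with if = j and kf = ℓ. Then for all i, j ∈ {1,…,n} and all f ∈ S_i: (i) if j < i then j < jf, and (ii) if i ≤ j then jf = i. -/
/-- A transformation `f` of `Fin n` is *nonpermutational* if every nonempty
subset `X` with `X.image f = X` is a singleton. -/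
def Nonpermutational {n : ℕ} (f : Fin n → Fin n) : Prop :=
  ∀ X : Finset (Fin n), X.Nonempty → X.image f = X → X.card = 1

/-- `FixIs f i` says that `i` is the unique fixed point of `f`. -/
def FixIs {n : ℕ} (f : Fin n → Fin n) (i : Fin n) : Prop :=
  f i = i ∧ ∀ j, f j = j → j = i

/-- A periodic point of a nonpermutational map is its unique fixed point. -/
lemma periodic_fix {n : ℕ} {f : Fin n → Fin n} (hnp : Nonpermutational f)
    {i : Fin n} (hfix : FixIs f i) {p : ℕ} (hp : 1 ≤ p) {y : Fin n}
    (hy : f^[p] y = y) : y = i := by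
  set C : Finset (Fin n) := (Finset.range p).image (fun k => f^[k] y) with hC
  have hyC : y ∈ C := by
    simp only [hC, Finset.mem_image, Finset.mem_range]
    exact ⟨0, hp, rfl⟩
  have himg : C.image f = C := by
    apply Finset.Subset.antisymm
    · intro z hz
      simp only [hC, Finset.mem_image, Finset.mem_range] at hz ⊢
      obtain ⟨w, ⟨k, hk, hw⟩, hz⟩ := hz
      rcases Nat.lt_or_ge (k + 1) p with h | h
      · exact ⟨k + 1, h, by rw [Function.iterate_succ_apply', hw]; exact hz⟩
      · have hkp : k + 1 = p := by omega
        refine ⟨0, hp, ?_⟩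
        have h1 : f^[p] y = z := by
          rw [← hkp, Function.iterate_succ_apply', hw]; exact hz
        rw [hy] at h1
        simpa using h1
    · intro z hz
      simp only [hC, Finset.mem_image, Finset.mem_range] at hz ⊢
      obtain ⟨k, hk, hzk⟩ := hz
      match k, hk, hzk with
      | 0, hk, hzk =>
        refine ⟨f^[p - 1] y, ⟨p - 1, by omega, rfl⟩, ?_⟩
        rw [← Function.iterate_succ_apply' f (p - 1) y]
        rw [show (p - 1).succ = p by omega, hy]
        simpa using hzk
      | (m + 1), hk, hzk =>
        refine ⟨f^[m] y, ⟨m, by omega, rfl⟩, ?_⟩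
        rw [← Function.iterate_succ_apply' f m y]; exact hzk
  have hcard := hnp C ⟨y, hyC⟩ himg
  obtain ⟨z, hz⟩ := Finset.card_eq_one.mp hcard
  have hfy : f y ∈ C := himg ▸ Finset.mem_image_of_mem f hyC
  rw [hz, Finset.mem_singleton] at hyC hfy
  exact hfix.2 y (hfy.trans hyC.symm)

/-- Every orbit of a nonpermutational map reaches the fixed point. -/
lemma reaches_fix {n : ℕ} {f : Fin n → Fin n} (hnp : Nonpermutational f)
    {i : Fin n} (hfix : FixIs f i) (x : Fin n) : ∃ m, f^[m] x = i := by
  obtain ⟨m1, m2, hne, heq⟩ := Finite.exists_ne_map_eq_of_infinite (fun m : ℕ => f^[m] x)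
  have hex : ∃ k l : ℕ, k < l ∧ f^[k] x = f^[l] x := by
    rcases lt_or_gt_of_ne hne with h | h
    · exact ⟨m1, m2, h, heq⟩
    · exact ⟨m2, m1, h, heq.symm⟩
  obtain ⟨k, l, hkl, hkeq⟩ := hex
  have hy : f^[l - k] (f^[k] x) = f^[k] x := by
    rw [← Function.iterate_add_apply]
    have hlk : l - k + k = l := by omega
    rw [hlk, ← hkeq]
  exact ⟨k, periodic_fix hnp hfix (by omega) hy⟩

/-- Lemma 1 of the paper. -/
theorem fix_structure_of_rich_subsemigroup
    (n : ℕ) (hn : 1 ≤ n) (S : Finset (Fin n → Fin n))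
    (hclosed : ∀ f ∈ S, ∀ g ∈ S, (fun x => g (f x)) ∈ S)
    (hnp : ∀ f ∈ S, Nonpermutational f)
    (hrich : ∀ i j k l : Fin n, i < j → k < l → i ≠ k →
      ∃ f ∈ S, FixIs f (⟨n - 1, by omega⟩ : Fin n) ∧ f i = j ∧ f k = l) :
    ∀ (i : Fin n) (f : Fin n → Fin n), f ∈ S → FixIs f i →
      (∀ j : Fin n, j < i → j < f j) ∧ (∀ j : Fin n, i ≤ j → f j = i) := by
  have hn1 : n - 1 < n := by omega
  intro i f hf hfix
  set t : Fin n := ⟨n - 1, hn1⟩ with htdef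
  have htval : (t : ℕ) = n - 1 := by rw [htdef]
  have hletop : ∀ x : Fin n, x ≤ t := by
    intro x
    rw [Fin.le_def, htval]
    have := x.isLt
    omega
  have hile : i ≤ t := hletop i
  -- two distinct fixed points are impossible
  have two_fix : ∀ k, k ∈ S → ∀ x y : Fin n, x ≠ y → k x = x → k y = y → False := by
    intro k hk x y hxy hx hy
    have himg : ({x, y} : Finset (Fin n)).image k = {x, y} := by
      rw [Finset.image_insert, Finset.image_singleton, hx, hy]
    have hcard := hnp k hk {x, y} ⟨x, by simp⟩ himg
    rw [Finset.card_insert_of_notMem (by simp [hxy]), Finset.card_singleton] at hcard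
    omega
  -- a 2-cycle is impossible
  have two_cycle : ∀ k, k ∈ S → ∀ x y : Fin n, x ≠ y → k x = y → k y = x → False := by
    intro k hk x y hxy hx hy
    have himg : ({x, y} : Finset (Fin n)).image k = {x, y} := by
      rw [Finset.image_insert, Finset.image_singleton, hx, hy, Finset.pair_comm]
    have hcard := hnp k hk {x, y} ⟨x, by simp⟩ himg
    rw [Finset.card_insert_of_notMem (by simp [hxy]), Finset.card_singleton] at hcard
    omega
  -- Lemma A: a member of S cannot have two descents with different values
  have lemA : ∀ F, F ∈ S → ∀ s1 p1 s2 p2 : Fin n, s1 < p1 → s2 < p2 → s1 ≠ s2 →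
      F p1 = s1 → F p2 = s2 → False := by
    intro F hF s1 p1 s2 p2 h1 h2 hne hF1 hF2
    obtain ⟨g, hgS, hgfix, hg1, hg2⟩ := hrich s1 p1 s2 p2 h1 h2 hne
    have hkS : (fun x => F (g x)) ∈ S := hclosed g hgS F hF
    apply two_fix _ hkS s1 s2 hne
    · show F (g s1) = s1; rw [hg1]; exact hF1
    · show F (g s2) = s2; rw [hg2]; exact hF2
  rcases eq_or_lt_of_le hile with heq | hlt
  · -- case i = t
    constructor
    · intro j hj
      by_contra hcon
      push_neg at hcon
      have hfj : f j ≠ j := by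
        intro h
        exact (ne_of_lt hj) (hfix.2 j h)
      have hfjlt : f j < j := lt_of_le_of_ne hcon hfj
      have hjt : j < t := by rw [← heq]; exact hj
      obtain ⟨g, hgS, hgfix, hg1, hg2⟩ := hrich (f j) j j t hfjlt hjt hfj
      have hkS : (fun x => f (g x)) ∈ S := hclosed g hgS f hf
      apply two_fix _ hkS (f j) t (ne_of_lt (lt_trans hfjlt hjt))
      · show f (g (f j)) = f j; rw [hg1]
      · show f (g t) = t
        rw [hgfix.1, ← heq]; exact hfix.1
    · intro j hij
      have hjt : j ≤ t := hletop j
      have hji : j = i := le_antisymm (by rw [heq]; exact hjt) hij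
      rw [hji]; exact hfix.1
  · -- case i < t
    set a : Fin n := f t with hadef
    have hane : a ≠ t := by
      intro h
      have hft : f t = t := by rw [← hadef]; exact h
      exact (ne_of_lt hlt) (hfix.2 t hft).symm
    have halt : a < t := lt_of_le_of_ne (hletop a) hane
    -- all descents of f land at a
    have descA : ∀ x : Fin n, f x < x → f x = a := by
      intro x hx
      by_contra hne2
      exact lemA f hf (f x) x a t hx halt hne2 rfl hadef.symm
    -- in fact a = i
    have hai : a = i := by
      by_contra haneqi
      have hex : ∃ m, f^[m] a = i := reaches_fix (hnp f hf) hfix a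
      set r := Nat.find hex with hrdef
      have hr : f^[r] a = i := Nat.find_spec hex
      have hmin : ∀ k, k < r → f^[k] a ≠ i := fun k hk => Nat.find_min hex hk
      have hrpos : 1 ≤ r := by
        by_contra h
        push_neg at h
        have hr0 : r = 0 := by omega
        rw [hr0] at hr
        simp only [Function.iterate_zero_apply] at hr
        exact haneqi hr
      have hinc : ∀ k, k < r → f^[k] a < f^[k + 1] a := by
        intro k hk
        have hxi : f^[k] a ≠ i := hmin k hk
        have hxfix : f (f^[k] a) ≠ f^[k] a := fun h => hxi (hfix.2 _ h)
        rcases lt_trichotomy (f (f^[k] a)) (f^[k] a) with h | h | h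
        · exfalso
          have h2 : f (f^[k] a) = a := descA _ h
          have h3 : f^[k + 1] a = a := by rw [Function.iterate_succ_apply']; exact h2
          exact haneqi (periodic_fix (hnp f hf) hfix (by omega) h3)
        · exact absurd h hxfix
        · rw [Function.iterate_succ_apply']; exact h
      have hmono : ∀ d k, k + d = r → f^[k] a ≤ i := by
        intro d
        induction d with
        | zero =>
          intro k hk
          rw [Nat.add_zero] at hk
          rw [hk, hr]
        | succ d ih =>
          intro k hk
          have h1 : f^[k] a < f^[k + 1] a := hinc k (by omega)
          have h2 : f^[k + 1] a ≤ i := ih (k + 1) (by omega)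
          exact le_of_lt (lt_of_lt_of_le h1 h2)
      have hai' : a < i := by
        have h0 : f^[0] a ≤ i := hmono r 0 (by omega)
        simp only [Function.iterate_zero_apply] at h0
        exact lt_of_le_of_ne h0 haneqi
      have key : f^[2] a ≤ i ∧ a < f^[2] a := by
        rcases Nat.lt_or_ge r 2 with hr2 | hr2
        · have hre : r = 1 := by omega
          have h1i : f^[1] a = i := by rw [← hre]; exact hr
          have h2 : f^[2] a = i := by
            have : f^[1 + 1] a = f (f^[1] a) := Function.iterate_succ_apply' f 1 a
            rw [show (2 : ℕ) = 1 + 1 from rfl, this, h1i, hfix.1]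
          exact ⟨le_of_eq h2, by rw [h2]; exact hai'⟩
        · constructor
          · exact hmono (r - 2) 2 (by omega)
          · have h01 : f^[0] a < f^[1] a := hinc 0 (by omega)
            have h12 : f^[1] a < f^[2] a := hinc 1 (by omega)
            have := lt_trans h01 h12
            simpa using this
      obtain ⟨ha2le, ha2gt⟩ := key
      have h1a : a < f^[1] a := by
        have := hinc 0 (by omega)
        simpa using this
      obtain ⟨g, hgS, hgfix, hga, hgi⟩ := hrich a (f^[1] a) i t h1a hlt (ne_of_lt hai')
      have hFS : (fun x => f (g (f x))) ∈ S :=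
        hclosed (fun x => g (f x)) (hclosed f hf g hgS) f hf
      apply lemA _ hFS a i (f^[2] a) t hai' (lt_of_le_of_lt ha2le hlt) (ne_of_lt ha2gt)
      · show f (g (f i)) = a
        simp only [hfix.1, hgi, hadef]
      · show f (g (f t)) = f^[1 + 1] a
        rw [Function.iterate_succ_apply' f 1 a, ← hadef, hga]
    have hfti : f t = i := by rw [← hadef]; exact hai
    have descA' : ∀ x : Fin n, f x < x → f x = i := fun x hx => (descA x hx).trans hai
    constructor
    · intro j hj
      rcases lt_trichotomy j (f j) with h | h | h
      · exact h
      · exact absurd (hfix.2 j h.symm) (ne_of_lt hj)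
      · exact absurd (descA' j h) (ne_of_lt (lt_trans h hj))
    · intro j hij
      rcases eq_or_lt_of_le hij with heqj | hltj
      · rw [← heqj]; exact hfix.1
      · rcases lt_trichotomy (f j) j with h | h | h
        · exact descA' j h
        · exact absurd (hfix.2 j h) (ne_of_gt hltj)
        · exfalso
          have hfjle : f j ≤ t := hletop _
          rcases eq_or_lt_of_le hfjle with hbt | hbt
          · have hjt : j < t := by rw [← hbt]; exact h
            obtain ⟨g, hgS, hgfix, hg1, hg2⟩ := hrich i j j t hltj hjt (ne_of_lt hltj)
            have hkS : (fun x => f (g x)) ∈ S := hclosed g hgS f hf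
            apply two_cycle _ hkS i t (ne_of_lt hlt)
            · show f (g i) = t; rw [hg1]; exact hbt
            · show f (g t) = i; rw [hgfix.1]; exact hfti
          · obtain ⟨g, hgS, hgfix, hg1, hg2⟩ :=
              hrich i j (f j) t hltj hbt (ne_of_lt (lt_trans hltj h))
            have hkS : (fun x => f (g x)) ∈ S := hclosed g hgS f hf
            apply two_cycle _ hkS i (f j) (ne_of_lt (lt_trans hltj h))
            · show f (g i) = f j; rw [hg1]
            · show f (g (f j)) = i; rw [hg2]; exact hfti
end

section
/- A function f : {1,…,n} → {1,…,n} (n ≥ 1) is nonpermutational if and only if some iterate of f is a constant function, i.e., there exists k ≥ 1 such that f^k is constant. Moreover, if f is nonpermutational then the n-th iterate f^n is already constant. -/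
private lemma image_iterate_fixed {n : ℕ} (f : Fin n → Fin n) (X : Finset (Fin n))
    (h : X.image f = X) : ∀ m : ℕ, X.image (f^[m]) = X := by
  intro m
  induction m with
  | zero => simp
  | succ m ih =>
    rw [Function.iterate_succ, ← Finset.image_image, h, ih]

private lemma iterate_n_const {n : ℕ} (hn : 1 ≤ n) (f : Fin n → Fin n)
    (hf : Nonpermutational f) : ∃ c : Fin n, f^[n] = fun _ => c := by
  have hzero : (0 : ℕ) < n := hn
  have hne : ∀ k : ℕ, (Finset.univ.image (f^[k])).Nonempty := fun k =>
    ⟨f^[k] ⟨0, hzero⟩, Finset.mem_image_of_mem _ (Finset.mem_univ _)⟩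
  have himg : ∀ k : ℕ, (Finset.univ.image (f^[k])).image f = Finset.univ.image (f^[k+1]) := by
    intro k
    rw [Finset.image_image, ← Function.iterate_succ']
  have hsub : ∀ k : ℕ, Finset.univ.image (f^[k+1]) ⊆ Finset.univ.image (f^[k]) := by
    intro k
    rw [Function.iterate_succ, ← Finset.image_image]
    exact Finset.image_subset_image (Finset.image_subset_iff.mpr (by simp))
  have key : ∀ k : ℕ, (Finset.univ.image (f^[k])).card = 1 ∨
      (Finset.univ.image (f^[k])).card + k ≤ n := by
    intro k
    induction k with
    | zero => right; simp
    | succ k ih =>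
      rcases ih with h1 | h2
      · left
        have hle := Finset.card_le_card (hsub k)
        have hpos := Finset.card_pos.mpr (hne (k+1))
        omega
      · by_cases heq : Finset.univ.image (f^[k+1]) = Finset.univ.image (f^[k])
        · left
          have : (Finset.univ.image (f^[k])).image f = Finset.univ.image (f^[k]) := by
            rw [himg k, heq]
          have h1 := hf _ (hne k) this
          have hle := Finset.card_le_card (hsub k)
          have hpos := Finset.card_pos.mpr (hne (k+1))
          omega
        · right
          have := Finset.card_lt_card (Finset.ssubset_iff_subset_ne.mpr ⟨hsub k, heq⟩)
          omega
  have hcard1 : (Finset.univ.image (f^[n])).card = 1 := by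
    rcases key n with h1 | h2
    · exact h1
    · have hpos := Finset.card_pos.mpr (hne n)
      omega
  obtain ⟨c, hc⟩ := Finset.card_eq_one.mp hcard1
  refine ⟨c, funext fun x => ?_⟩
  have : f^[n] x ∈ Finset.univ.image (f^[n]) := Finset.mem_image_of_mem _ (Finset.mem_univ _)
  rw [hc, Finset.mem_singleton] at this
  exact this

/-- `f : Fin n → Fin n` (with `n ≥ 1`) is nonpermutational iff some iterate
`f^[k]` (`k ≥ 1`) is a constant function; moreover in that case the `n`-th
iterate `f^[n]` is already constant. -/
theorem nonpermutational_iff_iterate_constant (n : ℕ) (hn : 1 ≤ n) (f : Fin n → Fin n) :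
    (Nonpermutational f ↔ ∃ k : ℕ, 1 ≤ k ∧ ∃ c : Fin n, f^[k] = fun _ => c) ∧
    (Nonpermutational f → ∃ c : Fin n, f^[n] = fun _ => c) := by
  constructor
  · constructor
    · intro hf
      exact ⟨n, hn, iterate_n_const hn f hf⟩
    · rintro ⟨k, hk, c, hc⟩ X hX hXf
      have hXk : X.image (f^[k]) = X := image_iterate_fixed f X hXf k
      rw [hc] at hXk
      have : X = {c} := by
        rw [← hXk, Finset.image_const hX]
      rw [this, Finset.card_singleton]
  · exact iterate_n_const hn f
end

section
/- Let n ≥ 1, let i ∈ {1,…,n}, and let S be a subsemigroup of T_n consisting only of nonpermutational transformations, all of which have i as their unique fixed point. Then |S| ≤ (n−1)!. -/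
private lemma aux_card_le : ∀ (n : ℕ), ∀ (A : Type) [Fintype A] [DecidableEq A],
    Fintype.card A = n → ∀ (i : A) (S : Finset (A → A)),
    (∀ f ∈ S, ∀ g ∈ S, (fun x => g (f x)) ∈ S) →
    (∀ f ∈ S, ∀ X : Finset A, X.Nonempty → X.image f = X → X.card = 1) →
    (∀ f ∈ S, f i = i ∧ ∀ j, f j = j → j = i) →
    S.card ≤ Nat.factorial (n - 1) := by
  intro n
  induction n using Nat.strong_induction_on with
  | _ n IH =>
    intro A instF instD hcard i S hclosed hnp hfix
    rcases Nat.lt_or_ge n 2 with hn | hn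
    · haveI : Subsingleton A := by
        rw [← Fintype.card_le_one_iff_subsingleton]; omega
      haveI : Subsingleton (A → A) := inferInstance
      calc S.card ≤ 1 := Finset.card_le_one.mpr (fun a _ b _ => Subsingleton.elim a b)
        _ ≤ _ := Nat.one_le_iff_ne_zero.mpr (Nat.factorial_pos _).ne'
    · obtain ⟨k, rfl⟩ : ∃ k, n = k + 2 := ⟨n - 2, by omega⟩
      set R : A → Finset A := fun z => insert z (S.image fun f => f z) with hR
      have hne : (Finset.univ.erase i).Nonempty := by
        rw [← Finset.card_pos, Finset.card_erase_of_mem (Finset.mem_univ i),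
          Finset.card_univ, hcard]; omega
      obtain ⟨m, hmmem, hmax⟩ := Finset.exists_max_image (Finset.univ.erase i)
        (fun z => (R z).card) hne
      have hmi : m ≠ i := Finset.ne_of_mem_erase hmmem
      have hm : ∀ f ∈ S, ∀ x, f x = m → x = m := by
        intro f hf x hfx
        by_contra hxm
        have hxi : x ≠ i := by
          rintro rfl
          exact hmi (((hfix f hf).1.symm.trans hfx).symm)
        have hsub : R m ⊆ R x := by
          intro y hy
          rcases Finset.mem_insert.mp hy with rfl | hy
          · exact Finset.mem_insert.mpr (Or.inr (Finset.mem_image.mpr ⟨f, hf, hfx⟩))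
          · obtain ⟨g, hg, rfl⟩ := Finset.mem_image.mp hy
            exact Finset.mem_insert.mpr (Or.inr (Finset.mem_image.mpr
              ⟨fun t => g (f t), hclosed f hf g hg, by simp [hfx]⟩))
        have hxR : x ∈ R x := Finset.mem_insert_self _ _
        have hxnR : x ∉ R m := by
          intro hx
          rcases Finset.mem_insert.mp hx with rfl | hx
          · exact hxm rfl
          · obtain ⟨g, hg, hgx⟩ := Finset.mem_image.mp hx
            have hmem : (fun t => g (f t)) ∈ S := hclosed f hf g hg
            have : x = i := (hfix _ hmem).2 x (by simp [hfx, hgx])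
            exact hxi this
        have hlt : (R m).card < (R x).card :=
          Finset.card_lt_card ⟨hsub, fun h => hxnR (h hxR)⟩
        have hle := hmax x (Finset.mem_erase.mpr ⟨hxi, Finset.mem_univ x⟩)
        omega
      have him : i ≠ m := fun h => hmi h.symm
      have hcard' : Fintype.card {x : A // x ≠ m} = k + 1 := by
        have := Fintype.card_subtype_compl (fun x : A => x = m)
        simp only [Fintype.card_subtype_eq, hcard] at this
        simpa using this
      set r : (A → A) → ({x : A // x ≠ m} → {x : A // x ≠ m}) :=
        fun f x => if h : f x.1 = m then ⟨i, him⟩ else ⟨f x.1, h⟩ with hr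
      have kv : ∀ f ∈ S, ∀ x : {x : A // x ≠ m}, (r f x).1 = f x.1 := by
        intro f hf x
        simp only [hr]
        split
        · exact absurd (hm f hf x.1 ‹_›) x.2
        · rfl
      set i' : {x : A // x ≠ m} := ⟨i, him⟩ with hi'
      set S' := S.image r with hS'
      have hrmem : ∀ f ∈ S, r f ∈ S' := fun f hf => Finset.mem_image_of_mem r hf
      have hcomp : ∀ f ∈ S, ∀ g ∈ S, (fun x => r g (r f x)) = r (fun x => g (f x)) := by
        intro f hf g hg
        funext x
        apply Subtype.ext
        rw [kv g hg, kv f hf, kv _ (hclosed f hf g hg)]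
      have h1 : ∀ f' ∈ S', ∀ g' ∈ S', (fun x => g' (f' x)) ∈ S' := by
        intro f' hf' g' hg'
        obtain ⟨f, hf, rfl⟩ := Finset.mem_image.mp hf'
        obtain ⟨g, hg, rfl⟩ := Finset.mem_image.mp hg'
        rw [hcomp f hf g hg]
        exact hrmem _ (hclosed f hf g hg)
      have h2 : ∀ f' ∈ S', ∀ X : Finset {x : A // x ≠ m}, X.Nonempty →
          X.image f' = X → X.card = 1 := by
        intro f' hf' X hXne hXim
        obtain ⟨f, hf, rfl⟩ := Finset.mem_image.mp hf'
        have key : (X.image Subtype.val).image f = X.image Subtype.val := by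
          rw [Finset.image_image]
          have heq : X.image (f ∘ Subtype.val) = X.image (Subtype.val ∘ r f) :=
            Finset.image_congr (fun x _ => (kv f hf x).symm)
          rw [heq, ← Finset.image_image, hXim]
        have hc := hnp f hf (X.image Subtype.val) (hXne.image _) key
        rwa [Finset.card_image_of_injective _ Subtype.val_injective] at hc
      have h3 : ∀ f' ∈ S', f' i' = i' ∧ ∀ j, f' j = j → j = i' := by
        intro f' hf'
        obtain ⟨f, hf, rfl⟩ := Finset.mem_image.mp hf'
        constructor
        · apply Subtype.ext
          rw [kv f hf]
          exact (hfix f hf).1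
        · intro j hj
          apply Subtype.ext
          have hj1 : f j.1 = j.1 := by rw [← kv f hf, hj]
          exact (hfix f hf).2 _ hj1
      have hS'card : S'.card ≤ Nat.factorial k := by
        have := IH (k + 1) (by omega) {x : A // x ≠ m} hcard' i' S' h1 h2 h3
        simpa using this
      have hinj : Set.InjOn (fun f => (r f, f m)) ↑S := by
        intro f hf g hg h
        have hA : r f = r g := (Prod.ext_iff.mp h).1
        have hB : f m = g m := (Prod.ext_iff.mp h).2
        funext x
        by_cases hx : x = m
        · rw [hx]; exact hB
        · have hc := congrArg (fun F => (F ⟨x, hx⟩).1) hA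
          rwa [kv f hf, kv g hg] at hc
      have hsubset : S.image (fun f => (r f, f m)) ⊆ S' ×ˢ Finset.univ.erase m := by
        intro p hp
        obtain ⟨f, hf, rfl⟩ := Finset.mem_image.mp hp
        refine Finset.mem_product.mpr ⟨hrmem f hf,
          Finset.mem_erase.mpr ⟨?_, Finset.mem_univ _⟩⟩
        intro hfm
        exact hmi ((hfix f hf).2 m hfm)
      calc S.card = (S.image (fun f => (r f, f m))).card :=
            (Finset.card_image_of_injOn hinj).symm
        _ ≤ (S' ×ˢ Finset.univ.erase m).card := Finset.card_le_card hsubset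
        _ = S'.card * (k + 1) := by
            rw [Finset.card_product, Finset.card_erase_of_mem (Finset.mem_univ m),
              Finset.card_univ, hcard]
            norm_num
        _ ≤ Nat.factorial k * (k + 1) := Nat.mul_le_mul_right _ hS'card
        _ = Nat.factorial (k + 2 - 1) := by
            simp [Nat.factorial_succ]; ring

/-- A subsemigroup of `T_n` (composition acting on the right) consisting only of
nonpermutational transformations all sharing the unique fixed point `i` has at
most `(n-1)!` elements. -/
theorem card_le_of_common_fixed_point
    (n : ℕ) (hn : 1 ≤ n) (i : Fin n) (S : Finset (Fin n → Fin n))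
    (hclosed : ∀ f ∈ S, ∀ g ∈ S, (fun x => g (f x)) ∈ S)
    (hnp : ∀ f ∈ S, Nonpermutational f)
    (hfix : ∀ f ∈ S, FixIs f i) :
    S.card ≤ Nat.factorial (n - 1) := by
  exact aux_card_le n (Fin n) (Fintype.card_fin n) i S hclosed
    (fun f hf => hnp f hf) (fun f hf => hfix f hf)
end

section
/- Let n ≥ 1 and let S be a subsemigroup of T_n consisting only of nonpermutational transformations. Then |S| ≤ n!. -/
open Finset

lemma np_exists_fixed {n : ℕ} (hn : 1 ≤ n) (f : Fin n → Fin n)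
    (hf : Nonpermutational f) : ∃ p, f p = p := by
  have : Fin n := ⟨0, hn⟩
  obtain ⟨a, b, hab, he⟩ := Finite.exists_ne_map_eq_of_infinite (fun k : ℕ => f^[k] this)
  wlog hlt : a < b generalizing a b
  · exact this b a hab.symm he.symm (by omega)
  set p := f^[a] this with hp
  set d := b - a with hd
  have hd1 : 1 ≤ d := by omega
  have hper : f^[d] p = p := by
    rw [hp, ← Function.iterate_add_apply]
    have : d + a = b := by omega
    rw [this, ← he]
  -- orbit
  set X : Finset (Fin n) := (Finset.range d).image (fun i => f^[i] p) with hX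
  have hpX : p ∈ X := by
    simp only [hX, mem_image, mem_range]
    exact ⟨0, by omega, rfl⟩
  have himg : X.image f = X := by
    apply Finset.Subset.antisymm
    · intro y hy
      simp only [hX, mem_image, mem_range] at hy ⊢
      obtain ⟨z, ⟨i, hi, hz⟩, hyz⟩ := hy
      by_cases h : i + 1 < d
      · exact ⟨i + 1, h, by rw [Function.iterate_succ_apply', hz, hyz]⟩
      · have : i + 1 = d := by omega
        refine ⟨0, by omega, ?_⟩
        rw [Function.iterate_zero_apply, ← hper, ← this,
          Function.iterate_succ_apply', hz, hyz]
    · intro y hy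
      simp only [hX, mem_image, mem_range] at hy ⊢
      obtain ⟨i, hi, hz⟩ := hy
      rcases Nat.eq_zero_or_pos i with h0 | h0
      · refine ⟨f^[d-1] p, ⟨d - 1, by omega, rfl⟩, ?_⟩
        have h1 : f (f^[d-1] p) = f^[d-1+1] p := (Function.iterate_succ_apply' f (d-1) p).symm
        have h2 : d - 1 + 1 = d := by omega
        rw [h1, h2, hper, ← hz, h0, Function.iterate_zero_apply]
      · refine ⟨f^[i-1] p, ⟨i - 1, by omega, rfl⟩, ?_⟩
        have h1 : f (f^[i-1] p) = f^[i-1+1] p := (Function.iterate_succ_apply' f (i-1) p).symm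
        have h2 : i - 1 + 1 = i := by omega
        rw [h1, h2, hz]
  have hcard := hf X ⟨p, hpX⟩ himg
  obtain ⟨q, hq⟩ := Finset.card_eq_one.mp hcard
  have hpq : p = q := by rwa [hq, mem_singleton] at hpX
  have : f p ∈ X := by rw [← himg]; exact mem_image_of_mem f hpX
  rw [hq, mem_singleton] at this
  exact ⟨p, by rw [this, hpq]⟩

lemma np_fixed_unique {n : ℕ} (f : Fin n → Fin n) (hf : Nonpermutational f)
    {p q : Fin n} (hp : f p = p) (hq : f q = q) : p = q := by
  have h : ({p, q} : Finset (Fin n)).image f = {p, q} := by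
    apply Finset.Subset.antisymm
    · intro y hy
      simp only [mem_image, mem_insert, mem_singleton] at hy ⊢
      obtain ⟨z, hz, hyz⟩ := hy
      rcases hz with rfl | rfl
      · left; rw [← hyz, hp]
      · right; rw [← hyz, hq]
    · intro y hy
      simp only [mem_insert, mem_singleton] at hy
      rcases hy with rfl | rfl
      · exact mem_image.mpr ⟨y, by simp, hp⟩
      · exact mem_image.mpr ⟨y, by simp, hq⟩
  have hcard := hf {p, q} ⟨p, by simp⟩ h
  have : ({p, q} : Finset (Fin n)).card ≤ 1 := le_of_eq hcard
  exact Finset.card_le_one.mp this p (by simp) q (by simp)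

lemma np_arith (n v j : ℕ) (h : v + 1 ≤ n) : n - (v+1) + (j+1) = n - v + j := by
  omega

lemma np_peel {n : ℕ} (F : Finset (Fin n → Fin n)) (d : Fin n) :
    ∀ v : ℕ, ∀ V : Finset (Fin n), V.card = v →
    (∀ x : Fin n, ¬ Relation.TransGen
        (fun a b : Fin n => a ∈ V ∧ b ∈ V ∧ ∃ f ∈ F, f a = b) x x) →
    (F.image (fun f => fun x => if x ∈ V then f x else d)).card
      ≤ ∏ j ∈ Finset.range v, (n - v + j) := by
  intro v
  induction v with
  | zero =>
    intro V hV _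
    have hVe : V = ∅ := Finset.card_eq_zero.mp hV
    subst hVe
    simp only [Finset.notMem_empty, if_false, Finset.range_zero, Finset.prod_empty]
    calc (F.image fun f => fun _ : Fin n => d).card
        ≤ ({fun _ : Fin n => d} : Finset (Fin n → Fin n)).card := by
          apply Finset.card_le_card
          intro g hg
          simp only [mem_image] at hg
          obtain ⟨f, _, rfl⟩ := hg
          simp
      _ = 1 := Finset.card_singleton _
  | succ v ih =>
    intro V hV hacyc
    have hVne : V.Nonempty := Finset.card_pos.mp (by omega)
    -- find a sink
    set r : Fin n → Fin n → Prop :=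
      fun x y => y ∈ V ∧ x ∈ V ∧ ∃ f ∈ F, f y = x with hr
    haveI : IsIrrefl (Fin n) (Relation.TransGen r) := by
      constructor
      intro x hx
      exact hacyc x (Relation.transGen_swap.mp hx)
    have wf : WellFounded (Relation.TransGen r) :=
      Finite.wellFounded_of_trans_of_irrefl _
    obtain ⟨a, haV, hmin⟩ := wf.has_min (↑V) ⟨hVne.choose, by
      simpa using hVne.choose_spec⟩
    have hsink : ∀ f ∈ F, f a ∉ V := by
      intro f hf hfa
      exact hmin (f a) hfa (Relation.TransGen.single ⟨haV, hfa, f, hf, rfl⟩)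
    have haV' : (a : Fin n) ∈ V := haV
    set V' := V.erase a with hV'
    have hcardV' : V'.card = v := by
      rw [hV', Finset.card_erase_of_mem haV', hV]
      omega
    -- θ map
    set θ : (Fin n → Fin n) → (Fin n) × (Fin n → Fin n) :=
      fun g => (g a, Function.update g a d) with hθ
    have hθinj : Function.Injective θ := by
      intro g g' h
      rw [Prod.mk.injEq] at h
      funext x
      by_cases hx : x = a
      · subst hx; exact h.1
      · have := congrFun h.2 x
        rwa [Function.update_of_ne hx, Function.update_of_ne hx] at this
    have hcardeq : (F.image (fun f => fun x => if x ∈ V then f x else d)).card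
        = ((F.image (fun f => fun x => if x ∈ V then f x else d)).image θ).card :=
      (Finset.card_image_of_injective _ hθinj).symm
    have hsubset : (F.image (fun f => fun x => if x ∈ V then f x else d)).image θ
        ⊆ (Finset.univ \ V) ×ˢ (F.image (fun f => fun x => if x ∈ V' then f x else d)) := by
      intro y hy
      simp only [Finset.mem_image] at hy
      obtain ⟨g, hg, rfl⟩ := hy
      obtain ⟨f, hfF, rfl⟩ := hg
      rw [Finset.mem_product]
      constructor
      · simp only [hθ, if_pos haV', Finset.mem_sdiff, Finset.mem_univ, true_and]
        exact hsink f hfF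
      · simp only [hθ]
        apply Finset.mem_image.mpr
        refine ⟨f, hfF, ?_⟩
        funext x
        by_cases hx : x = a
        · subst hx
          rw [Function.update_self]
          have hxV' : x ∉ V' := Finset.notMem_erase x V
          rw [if_neg hxV']
        · rw [Function.update_of_ne hx]
          have : x ∈ V' ↔ x ∈ V := by
            rw [hV', Finset.mem_erase]
            exact ⟨fun h => h.2, fun h => ⟨hx, h⟩⟩
          by_cases hxV : x ∈ V
          · rw [if_pos hxV, if_pos (this.mpr hxV)]
          · rw [if_neg hxV, if_neg (fun h => hxV (this.mp h))]
    have hvn : v + 1 ≤ n := by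
      rw [← hV]
      calc V.card ≤ Finset.univ.card := Finset.card_le_univ V
        _ = n := by simp
    calc (F.image (fun f => fun x => if x ∈ V then f x else d)).card
        = ((F.image (fun f => fun x => if x ∈ V then f x else d)).image θ).card := hcardeq
      _ ≤ ((Finset.univ \ V) ×ˢ (F.image (fun f => fun x => if x ∈ V' then f x else d))).card :=
          Finset.card_le_card hsubset
      _ = (Finset.univ \ V).card * (F.image (fun f => fun x => if x ∈ V' then f x else d)).card :=
          Finset.card_product _ _
      _ ≤ (n - (v+1)) * ∏ j ∈ Finset.range v, (n - v + j) := by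
          apply Nat.mul_le_mul
          · rw [Finset.card_sdiff_of_subset (Finset.subset_univ V), hV]
            simp
          · apply ih V' hcardV'
            intro x hx
            apply hacyc x
            refine Relation.TransGen.mono ?_ x x hx
            intro p q hpq
            exact ⟨Finset.mem_of_mem_erase hpq.1, Finset.mem_of_mem_erase hpq.2.1, hpq.2.2⟩
      _ = ∏ j ∈ Finset.range (v+1), (n - (v+1) + j) := by
          have hps := Finset.prod_range_succ' (fun j => n - (v+1) + j) v
          rw [hps]
          have hterm : ∀ j ∈ Finset.range v, n - (v+1) + (j+1) = n - v + j :=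
            fun j _ => np_arith n v j hvn
          have hpc : (∏ j ∈ Finset.range v, (n - (v+1) + (j+1)))
              = ∏ j ∈ Finset.range v, (n - v + j) := Finset.prod_congr rfl hterm
          rw [hpc]
          simp [Nat.mul_comm]

/-- Any subsemigroup of `T_n` (composition acting on the right) consisting
only of nonpermutational transformations has at most `n!` elements. -/
theorem card_le_factorial_of_nonpermutational_subsemigroup
    (n : ℕ) (hn : 1 ≤ n) (S : Finset (Fin n → Fin n))
    (hclosed : ∀ f ∈ S, ∀ g ∈ S, (fun x => g (f x)) ∈ S)
    (hnp : ∀ f ∈ S, Nonpermutational f) :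
    S.card ≤ Nat.factorial n := by
  classical
  have hfixex : ∀ f ∈ S, ∃ p, f p = p := fun f hf => np_exists_fixed hn f (hnp f hf)
  set κ : (Fin n → Fin n) → Fin n :=
    fun f => if h : ∃ p, f p = p then h.choose else ⟨0, hn⟩ with hκdef
  have hκ : ∀ f ∈ S, f (κ f) = κ f := by
    intro f hf
    have h := hfixex f hf
    simp only [hκdef, dif_pos h]
    exact h.choose_spec
  have h1 : S.card = ∑ p ∈ Finset.univ, (S.filter (fun f => κ f = p)).card :=
    Finset.card_eq_sum_card_fiberwise (fun f _ => Finset.mem_univ (κ f))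
  have hfib : ∀ p : Fin n, (S.filter (fun f => κ f = p)).card ≤ Nat.factorial (n-1) := by
    intro p
    have hsub : S.filter (fun f => κ f = p) ⊆ S.filter (fun f => f p = p) := by
      intro f hf
      rw [Finset.mem_filter] at hf ⊢
      exact ⟨hf.1, by rw [← hf.2]; exact hκ f hf.1⟩
    refine le_trans (Finset.card_le_card hsub) ?_
    set F := S.filter (fun f => f p = p) with hF
    set V := Finset.univ.erase p with hVdef
    have hchain : ∀ x y : Fin n, Relation.TransGen
        (fun a b : Fin n => a ∈ V ∧ b ∈ V ∧ ∃ f ∈ F, f a = b) x y →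
        x ∈ V ∧ ∃ g ∈ S, g p = p ∧ g x = y := by
      intro x y h
      induction h with
      | single h =>
        obtain ⟨hx, hy, f, hfF, hfx⟩ := h
        rw [hF, Finset.mem_filter] at hfF
        exact ⟨hx, f, hfF.1, hfF.2, hfx⟩
      | tail hxy h ih =>
        obtain ⟨hx, g, hgS, hgp, hgx⟩ := ih
        obtain ⟨hy, hz, f, hfF, hfy⟩ := h
        rw [hF, Finset.mem_filter] at hfF
        refine ⟨hx, fun t => f (g t), hclosed g hgS f hfF.1, ?_, ?_⟩
        · show f (g p) = p
          rw [hgp, hfF.2]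
        · show f (g x) = _
          rw [hgx, hfy]
    have hacyc : ∀ x : Fin n, ¬ Relation.TransGen
        (fun a b : Fin n => a ∈ V ∧ b ∈ V ∧ ∃ f ∈ F, f a = b) x x := by
      intro x hx
      obtain ⟨hxV, g, hgS, hgp, hgx⟩ := hchain x x hx
      have hxp := np_fixed_unique g (hnp g hgS) hgx hgp
      rw [hVdef, Finset.mem_erase] at hxV
      exact hxV.1 hxp
    have hVcard : V.card = n - 1 := by
      rw [hVdef, Finset.card_erase_of_mem (Finset.mem_univ p)]
      simp
    have hpeel := np_peel F p (n-1) V hVcard hacyc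
    have himg : F.image (fun f => fun x => if x ∈ V then f x else p) = F := by
      have heq : ∀ f ∈ F, (fun x => if x ∈ V then f x else p) = f := by
        intro f hf
        rw [hF, Finset.mem_filter] at hf
        funext x
        by_cases hx : x = p
        · subst hx
          rw [if_neg (by simp [hVdef]), hf.2]
        · rw [if_pos (by simp [hVdef, hx])]
      calc F.image (fun f => fun x => if x ∈ V then f x else p)
          = F.image id := Finset.image_congr (fun f hf => heq f hf)
        _ = F := Finset.image_id
    rw [himg] at hpeel
    refine le_trans hpeel (le_of_eq ?_)
    have hterm : ∀ j ∈ Finset.range (n-1), (n - (n-1) + j) = j + 1 :=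
      fun j _ => by omega
    have hpc : (∏ j ∈ Finset.range (n-1), (n - (n-1) + j))
        = ∏ j ∈ Finset.range (n-1), (j + 1) := Finset.prod_congr rfl hterm
    rw [hpc]
    exact Finset.prod_range_add_one_eq_factorial (n-1)
  calc S.card = ∑ p ∈ Finset.univ, (S.filter (fun f => κ f = p)).card := h1
    _ ≤ ∑ _p ∈ (Finset.univ : Finset (Fin n)), Nat.factorial (n-1) :=
        Finset.sum_le_sum (fun p _ => hfib p)
    _ = n * Nat.factorial (n-1) := by
        simp [Finset.sum_const, Finset.card_univ, Nat.smul_one_eq_cast]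
    _ = Nat.factorial n := by
        cases n with
        | zero => omega
        | succ m => simp [Nat.factorial_succ]
end

section
/- Let n ≥ 1, let i ∈ {1,…,n}, and let S be a subsemigroup of T_n consisting only of nonpermutational transformations, all of which have i as their unique fixed point. Define the relation ≺ on {1,…,n} by: j ≺ k if and only if j ≠ i and jf = k for some f ∈ S. Then ≺ is transitive and irreflexive (i.e., it is a strict partial order), and i is its largest element in the sense that j ≺ i whenever j ≺ k for some k and j ≠ i implies jg = i for some g ∈ S; in particular no j lies on a ≺-cycle. -/
/-- The relation `j ≺ k` iff `j ≠ i` and `f j = k` for some `f ∈ S`. -/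
def Prec {n : ℕ} (S : Finset (Fin n → Fin n)) (i : Fin n) (j k : Fin n) : Prop :=
  j ≠ i ∧ ∃ f ∈ S, f j = k

/-- Let `S` be a subsemigroup of `T_n` (composition acting on the right) of
nonpermutational transformations all having `i` as their unique fixed point,
and let `j ≺ k` iff `j ≠ i` and `jf = k` for some `f ∈ S`.  Then `≺` is
transitive and irreflexive (a strict partial order, hence has no cycles), and
`i` is its largest element: whenever `j ≺ k` for some `k`, also `j g = i` for
some `g ∈ S` (i.e. `j ≺ i`). -/
theorem prec_strict_partial_order_with_top
    (n : ℕ) (hn : 1 ≤ n) (i : Fin n) (S : Finset (Fin n → Fin n))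
    (hclosed : ∀ f ∈ S, ∀ g ∈ S, (fun x => g (f x)) ∈ S)
    (hnp : ∀ f ∈ S, Nonpermutational f)
    (hfix : ∀ f ∈ S, FixIs f i) :
    (∀ a b c : Fin n, Prec S i a b → Prec S i b c → Prec S i a c) ∧
    (∀ a : Fin n, ¬ Prec S i a a) ∧
    (∀ a b : Fin n, Prec S i a b → ∃ g ∈ S, g a = i) := by
  -- iterates of members of S stay in S
  have hiter : ∀ f ∈ S, ∀ k : ℕ, 1 ≤ k → f^[k] ∈ S := by
    intro f hf k hk
    induction k with
    | zero => omega
    | succ k ih =>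
      rcases Nat.eq_or_lt_of_le hk with h | h
      · obtain rfl : k = 0 := by omega
        simpa using hf
      · have hk1 : 1 ≤ k := by omega
        have := hclosed _ (ih hk1) _ hf
        have heq : (fun x => f (f^[k] x)) = f^[k+1] := by
          funext x; rw [Function.iterate_succ_apply']
        rwa [heq] at this
  -- key lemma: for f ∈ S, f^[n] x = i for all x
  have key : ∀ f ∈ S, ∀ x : Fin n, f^[n] x = i := by
    intro f hf x
    obtain ⟨p, q, hne, heq⟩ :
        ∃ p q : Fin (n+1), p ≠ q ∧ f^[(p:ℕ)] x = f^[(q:ℕ)] x := by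
      have hcard : Fintype.card (Fin n) < Fintype.card (Fin (n+1)) := by simp
      obtain ⟨p, q, hne, heq⟩ :=
        Fintype.exists_ne_map_eq_of_card_lt (fun k : Fin (n+1) => f^[(k:ℕ)] x) hcard
      exact ⟨p, q, hne, heq⟩
    -- wlog p < q
    obtain ⟨p, q, hpq, hpn, heq⟩ :
        ∃ p q : ℕ, p < q ∧ q ≤ n ∧ f^[p] x = f^[q] x := by
      rcases lt_or_gt_of_ne hne with h | h
      · exact ⟨p, q, h, by omega, heq⟩
      · exact ⟨q, p, h, by omega, heq.symm⟩
    set r := q - p with hr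
    have hr1 : 1 ≤ r := by omega
    set X : Finset (Fin n) := (Finset.range r).image (fun t => f^[p + t] x) with hX
    have hstep : ∀ m : ℕ, f (f^[m] x) = f^[m+1] x := fun m =>
      (Function.iterate_succ_apply' f m x).symm
    have himg : X.image f = X := by
      ext y
      simp only [hX, Finset.mem_image, Finset.mem_range]
      constructor
      · rintro ⟨z, ⟨t, ht, rfl⟩, rfl⟩
        by_cases h1 : t + 1 < r
        · refine ⟨t + 1, h1, ?_⟩
          rw [hstep]
          have : p + (t + 1) = p + t + 1 := by omega
          rw [this]
        · refine ⟨0, by omega, ?_⟩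
          rw [hstep]
          have h2 : p + t + 1 = q := by omega
          rw [h2, Nat.add_zero]
          exact heq
      · rintro ⟨t, ht, rfl⟩
        by_cases h0 : t = 0
        · subst h0
          refine ⟨f^[p + (r-1)] x, ⟨r - 1, by omega, rfl⟩, ?_⟩
          rw [hstep]
          have h2 : p + (r - 1) + 1 = q := by omega
          rw [h2, Nat.add_zero]
          exact heq.symm
        · refine ⟨f^[p + (t-1)] x, ⟨t - 1, by omega, rfl⟩, ?_⟩
          rw [hstep]
          have : p + (t - 1) + 1 = p + t := by omega
          rw [this]
    have hne' : X.Nonempty := ⟨f^[p] x, by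
      simp only [hX, Finset.mem_image, Finset.mem_range]
      exact ⟨0, by omega, by simp⟩⟩
    have hcard1 := hnp f hf X hne' himg
    obtain ⟨z, hz⟩ := Finset.card_eq_one.mp hcard1
    have hfz : f z = z := by
      have : X.image f = {f z} := by rw [hz]; simp
      rw [himg, hz] at this
      exact (Finset.singleton_inj.mp this).symm
    have hzi : z = i := (hfix f hf).2 z hfz
    have hpz : f^[p] x = z := by
      have : f^[p] x ∈ X := by
        simp only [hX, Finset.mem_image, Finset.mem_range]
        exact ⟨0, by omega, by simp⟩
      rw [hz] at this; simpa using this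
    have hii : ∀ m : ℕ, f^[m] i = i := by
      intro m
      induction m with
      | zero => simp
      | succ m ih => rw [Function.iterate_succ_apply', ih, (hfix f hf).1]
    have : f^[n] x = f^[n - p] (f^[p] x) := by
      rw [← Function.iterate_add_apply]
      congr 1; omega
    rw [this, hpz, hzi, hii]
  refine ⟨?_, ?_, ?_⟩
  · rintro a b c ⟨hai, f, hfS, rfl⟩ ⟨hbi, g, hgS, rfl⟩
    exact ⟨hai, (fun x => g (f x)), hclosed f hfS g hgS, rfl⟩
  · rintro a ⟨hai, f, hfS, hfa⟩
    exact hai ((hfix f hfS).2 a hfa)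
  · rintro a b ⟨hai, f, hfS, _⟩
    exact ⟨f^[n], hiter f hfS n hn, key f hfS a⟩
end

section
/- Let A = (Q, Σ, δ, q₀, F) be a finite deterministic automaton that is connected and reduced. Then the language L(A) recognized by A is generalized definite if and only if A avoids the pattern P_g, i.e., there do NOT exist distinct states p, q ∈ Q and nonempty words x, y ∈ Σ⁺ with δ*(p,x) = p, δ*(q,x) = q and δ*(p,y) = q. -/
/-- Every state of `M` is reachable from the start state. -/
def DFA.Connected {α σ : Type*} (M : DFA α σ) : Prop :=
  ∀ q : σ, ∃ u : List α, M.evalFrom M.start u = q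

/-- `M` is reduced: connected, and any two distinct states are distinguishable
by some word (exactly one of the two resulting states is accepting). -/
def DFA.Reduced {α σ : Type*} (M : DFA α σ) : Prop :=
  M.Connected ∧ ∀ p q : σ, p ≠ q →
    ∃ u : List α, ¬(M.evalFrom p u ∈ M.accept ↔ M.evalFrom q u ∈ M.accept)

/-- `M` admits the pattern `P_g`: distinct states `p, q` and nonempty words
`x, y` with `px = p`, `qx = q` and `py = q`. -/
def DFA.AdmitsPg {α σ : Type*} (M : DFA α σ) : Prop :=
  ∃ (p q : σ) (x y : List α), p ≠ q ∧ x ≠ [] ∧ y ≠ [] ∧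
    M.evalFrom p x = p ∧ M.evalFrom q x = q ∧ M.evalFrom p y = q

/-- A language is generalized definite if membership only depends on the
prefix and suffix of length `k`, for some constant `k`. -/
def GeneralizedDefinite {α : Type*} (L : Language α) : Prop :=
  ∃ k : ℕ, ∀ x₁ x₂ y : List α, x₁.length = k → x₂.length = k →
    ((x₁ ++ y ++ x₂) ∈ L ↔ (x₁ ++ x₂) ∈ L)

namespace PgAux

open DFA

variable {α σ : Type*} (M : DFA α σ)

lemma evalFrom_join_replicate {p : σ} {x : List α} (hx : M.evalFrom p x = p) :
    ∀ k : ℕ, M.evalFrom p (List.replicate k x).flatten = p := by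
  intro k
  induction k with
  | zero => simp
  | succ n ih =>
      rw [List.replicate_succ, List.flatten_cons, M.evalFrom_of_append, hx, ih]

lemma length_flatten_replicate (k : ℕ) (x : List α) :
    ((List.replicate k x).flatten).length = k * x.length := by
  induction k with
  | zero => simp
  | succ n ih => rw [List.replicate_succ, List.flatten_cons, List.length_append, ih]; ring

/-- Pair pigeonhole: a common cycle factor for two simultaneous runs. -/
lemma pair_split [Fintype σ] (p q : σ) (z : List α)
    (hlen : Fintype.card σ * Fintype.card σ ≤ z.length) :
    ∃ a b c : List α, z = a ++ b ++ c ∧ b ≠ [] ∧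
      M.evalFrom (M.evalFrom p a) b = M.evalFrom p a ∧
      M.evalFrom (M.evalFrom q a) b = M.evalFrom q a := by
  obtain ⟨n, m, hneq, heq⟩ :=
    Fintype.exists_ne_map_eq_of_card_lt
      (fun i : Fin (Fintype.card σ * Fintype.card σ + 1) =>
        (M.evalFrom p (z.take i), M.evalFrom q (z.take i)))
      (by simp [Fintype.card_prod])
  wlog hle : (n : ℕ) ≤ m generalizing n m
  · exact this m n hneq.symm heq.symm (le_of_not_ge hle)
  have hlt : (n : ℕ) < m := lt_of_le_of_ne hle (fun h => hneq (Fin.ext h))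
  have hm : (m : ℕ) ≤ z.length := le_trans (Nat.le_of_lt_succ m.is_lt) hlen
  refine ⟨z.take n, (z.take m).drop n, z.drop m, ?_, ?_, ?_, ?_⟩
  · have : (z.take m).take n = z.take n := by
      rw [List.take_take, min_eq_left hle]
    rw [← this, List.take_append_drop, List.take_append_drop]
  · have : ((z.take m).drop n).length = m - n := by
      simp [List.length_drop, List.length_take, min_eq_left hm]
    intro h
    rw [h] at this
    simp at this
    omega
  · have h1 : z.take n ++ (z.take m).drop n = z.take m := by
      conv_lhs => rw [show z.take n = (z.take m).take n by
        rw [List.take_take, min_eq_left hle]]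
      exact List.take_append_drop _ _
    rw [← M.evalFrom_of_append, h1]
    exact (congrArg Prod.fst heq).symm
  · have h1 : z.take n ++ (z.take m).drop n = z.take m := by
      conv_lhs => rw [show z.take n = (z.take m).take n by
        rw [List.take_take, min_eq_left hle]]
      exact List.take_append_drop _ _
    rw [← M.evalFrom_of_append, h1]
    exact (congrArg Prod.snd heq).symm

/-- From a `b`-cyclic state, after any detour, pumping `b` returns exactly. -/
lemma return_lemma [Fintype σ] (hM : ¬ M.AdmitsPg) {s : σ} {b : List α}
    (hb : b ≠ []) (hs : M.evalFrom s b = s) (y : List α) :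
    ∃ e : ℕ, M.evalFrom s (y ++ (List.replicate e b).flatten) = s := by
  obtain ⟨n, m, hneq, heq⟩ :=
    Fintype.exists_ne_map_eq_of_card_lt
      (fun i : Fin (Fintype.card σ + 1) =>
        M.evalFrom s (y ++ (List.replicate (i : ℕ) b).flatten))
      (by simp)
  wlog hle : (n : ℕ) ≤ m generalizing n m
  · exact this m n hneq.symm heq.symm (le_of_not_ge hle)
  have hlt : (n : ℕ) < m := lt_of_le_of_ne hle (fun h => hneq (Fin.ext h))
  set r := M.evalFrom s (y ++ (List.replicate (n : ℕ) b).flatten) with hr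
  set X := (List.replicate ((m : ℕ) - n) b).flatten with hX
  have hXne : X ≠ [] := by
    intro h
    have h2 := length_flatten_replicate ((m : ℕ) - n) b
    rw [← hX, h, List.length_nil] at h2
    have hbpos : 0 < b.length := List.length_pos_iff.mpr hb
    have : 0 < (m : ℕ) - n := by omega
    nlinarith
  have hrX : M.evalFrom r X = r := by
    have : (List.replicate (n : ℕ) b).flatten ++ X = (List.replicate (m : ℕ) b).flatten := by
      rw [hX, ← List.flatten_append, ← List.replicate_add,
        Nat.add_sub_cancel' hle]
    rw [hr, ← M.evalFrom_of_append, List.append_assoc, this]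
    exact heq.symm
  have hsX : M.evalFrom s X = s := evalFrom_join_replicate M hs _
  by_cases hys : y ++ (List.replicate (n : ℕ) b).flatten = []
  · exact ⟨n, by rw [hys]; exact M.evalFrom_nil s⟩
  · by_cases hrs : r = s
    · exact ⟨n, by rw [← hr, hrs]⟩
    · exact absurd ⟨s, r, X, _, Ne.symm hrs, hXne, hys, hsX, hrX, hr.symm⟩ hM

end PgAux

/-- A connected, reduced finite automaton recognizes a generalized definite
language iff it avoids the pattern `P_g`. -/
theorem generalizedDefinite_iff_avoids_Pg {α σ : Type*} [Finite α] [Finite σ]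
    (M : DFA α σ) (hred : M.Reduced) :
    GeneralizedDefinite M.accepts ↔ ¬ M.AdmitsPg := by
  classical
  constructor
  · rintro ⟨k, hk⟩ ⟨p, q, x, y, hpq, hx, hy, hpx, hqx, hpy⟩
    obtain ⟨w, hw⟩ := hred.1 p
    obtain ⟨u, hu⟩ := hred.2 p q hpq
    set X := (List.replicate k x).flatten with hXdef
    have hXp : M.evalFrom p X = p := PgAux.evalFrom_join_replicate M hpx k
    have hXq : M.evalFrom q X = q := PgAux.evalFrom_join_replicate M hqx k
    have hXlen : k ≤ X.length := by
      rw [hXdef, PgAux.length_flatten_replicate]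
      have : 1 ≤ x.length := List.length_pos_iff.mpr hx
      calc k = k * 1 := (Nat.mul_one k).symm
        _ ≤ k * x.length := Nat.mul_le_mul_left k this
    set x₁ := (w ++ X).take k with hx1def
    set r := (w ++ X).drop k with hrdef
    set m := (X ++ u).length - k with hmdef
    set s₂ := (X ++ u).take m with hs2def
    set x₂ := (X ++ u).drop m with hx2def
    have hklen : k ≤ (X ++ u).length := by
      rw [List.length_append]; omega
    have h1 : x₁.length = k := by
      rw [hx1def, List.length_take, min_eq_left]
      rw [List.length_append]; omega
    have h2 : x₂.length = k := by
      rw [hx2def, List.length_drop, hmdef]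
      omega
    have e1 : x₁ ++ r = w ++ X := List.take_append_drop _ _
    have e2 : s₂ ++ x₂ = X ++ u := List.take_append_drop _ _
    have hword1 : x₁ ++ (r ++ s₂) ++ x₂ = w ++ (X ++ (X ++ u)) := by
      calc x₁ ++ (r ++ s₂) ++ x₂ = (x₁ ++ r) ++ (s₂ ++ x₂) := by
            simp [List.append_assoc]
        _ = (w ++ X) ++ (X ++ u) := by rw [e1, e2]
        _ = w ++ (X ++ (X ++ u)) := by simp [List.append_assoc]
    have hword2 : x₁ ++ (r ++ (y ++ (X ++ s₂))) ++ x₂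
        = w ++ (X ++ (y ++ (X ++ (X ++ u)))) := by
      calc x₁ ++ (r ++ (y ++ (X ++ s₂))) ++ x₂
          = (x₁ ++ r) ++ (y ++ (X ++ (s₂ ++ x₂))) := by simp [List.append_assoc]
        _ = (w ++ X) ++ (y ++ (X ++ (X ++ u))) := by rw [e1, e2]
        _ = w ++ (X ++ (y ++ (X ++ (X ++ u)))) := by simp [List.append_assoc]
    have hA := hk x₁ x₂ (r ++ s₂) h1 h2
    have hB := hk x₁ x₂ (r ++ (y ++ (X ++ s₂))) h1 h2
    rw [hword1] at hA
    rw [hword2] at hB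
    have m1 : (w ++ (X ++ (X ++ u))) ∈ M.accepts ↔ M.evalFrom p u ∈ M.accept := by
      rw [DFA.mem_accepts]
      show M.evalFrom M.start _ ∈ M.accept ↔ _
      rw [M.evalFrom_of_append, hw, M.evalFrom_of_append, hXp,
        M.evalFrom_of_append, hXp]
    have m2 : (w ++ (X ++ (y ++ (X ++ (X ++ u))))) ∈ M.accepts
        ↔ M.evalFrom q u ∈ M.accept := by
      rw [DFA.mem_accepts]
      show M.evalFrom M.start _ ∈ M.accept ↔ _
      rw [M.evalFrom_of_append, hw, M.evalFrom_of_append, hXp,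
        M.evalFrom_of_append, hpy, M.evalFrom_of_append, hXq,
        M.evalFrom_of_append, hXq]
    exact hu (m1.symm.trans (hA.trans (hB.symm.trans m2)))
  · intro hM
    haveI : Fintype σ := Fintype.ofFinite σ
    refine ⟨Fintype.card σ * Fintype.card σ, fun x₁ x₂ y h1 h2 => ?_⟩
    by_cases hy : y = []
    · rw [hy]; simp
    obtain ⟨a, b, c, hx1, hb, hsb, -⟩ :=
      PgAux.pair_split M M.start M.start x₁ (by omega)
    have hQ : M.evalFrom M.start x₁ = M.evalFrom (M.evalFrom M.start a) c := by
      rw [hx1, M.evalFrom_of_append, M.evalFrom_of_append, hsb]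
    obtain ⟨a', b', c', hx2, hb', hP', hQ'⟩ :=
      PgAux.pair_split M (M.evalFrom (M.evalFrom M.start x₁) y) (M.evalFrom M.start x₁) x₂
        (by omega)
    obtain ⟨e, he⟩ := PgAux.return_lemma M hM hb hsb (c ++ a')
    have hreach : M.evalFrom (M.evalFrom (M.evalFrom M.start x₁) a')
        ((List.replicate e b).flatten ++ (c ++ y ++ a'))
        = M.evalFrom (M.evalFrom (M.evalFrom M.start x₁) y) a' := by
      simp only [M.evalFrom_of_append, hQ] at he ⊢
      rw [he]
    have hYne : (List.replicate e b).flatten ++ (c ++ y ++ a') ≠ [] := by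
      simp [hy]
    have hEq : M.evalFrom (M.evalFrom M.start x₁) a'
        = M.evalFrom (M.evalFrom (M.evalFrom M.start x₁) y) a' := by
      by_contra hne
      exact hM ⟨M.evalFrom (M.evalFrom M.start x₁) a',
        M.evalFrom (M.evalFrom (M.evalFrom M.start x₁) y) a', b',
        (List.replicate e b).flatten ++ (c ++ y ++ a'),
        hne, hb', hYne, hQ', hP', hreach⟩
    rw [DFA.mem_accepts, DFA.mem_accepts]
    show M.evalFrom M.start _ ∈ M.accept ↔ M.evalFrom M.start _ ∈ M.accept
    rw [hx2]
    simp only [M.evalFrom_of_append]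
    rw [hP', hQ', hEq]
end

section
/- Let A = (Q, Σ, δ, q₀, F) be a finite deterministic automaton that is connected and reduced. Then A avoids the pattern P_g (there do not exist distinct states p, q and nonempty words x, y with δ*(p,x) = p, δ*(q,x) = q, δ*(p,y) = q) if and only if every nontrivial component of A is a sink and for every nonempty word u ∈ Σ⁺ and every sink C of A the restriction of the transformation q ↦ δ*(q,u) to C is a nonpermutational transformation of C. -/
/-- `q` is reachable from `p`. -/
def DFA.Reach {α σ : Type*} (M : DFA α σ) (p q : σ) : Prop :=
  ∃ u : List α, M.evalFrom p u = q

/-- The component (class of the mutual-reachability equivalence) of `q`. -/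
def DFA.component {α σ : Type*} (M : DFA α σ) (q : σ) : Set σ :=
  {p | M.Reach p q ∧ M.Reach q p}

/-- A component is trivial if it is a singleton `{p}` with no loop `p a = p`. -/
def DFA.TrivialComponent {α σ : Type*} (M : DFA α σ) (C : Set σ) : Prop :=
  ∃ p : σ, C = {p} ∧ ∀ a : α, M.step p a ≠ p

/-- A set of states is a sink if it is closed under all transitions. -/
def DFA.IsSink {α σ : Type*} (M : DFA α σ) (C : Set σ) : Prop :=
  ∀ p ∈ C, ∀ a : α, M.step p a ∈ C

/- ──────────────── auxiliary material ──────────────── -/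

/-- `n`-fold repetition of a word. -/
private def wpow {α : Type*} (x : List α) : ℕ → List α
  | 0 => []
  | n + 1 => x ++ wpow x n

private lemma evalFrom_wpow {α σ : Type*} (M : DFA α σ) (x : List α) (n : ℕ) (p : σ) :
    M.evalFrom p (wpow x n) = (fun s => M.evalFrom s x)^[n] p := by
  induction n generalizing p with
  | zero => rfl
  | succ n ih =>
    rw [wpow, DFA.evalFrom_of_append, ih, Function.iterate_succ_apply]

private lemma wpow_ne_nil {α : Type*} {x : List α} (hx : x ≠ []) {n : ℕ} (hn : 0 < n) :
    wpow x n ≠ [] := by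
  cases n with
  | zero => omega
  | succ n => simp [wpow, hx]

private lemma reach_trans {α σ : Type*} {M : DFA α σ} {p q r : σ}
    (h1 : M.Reach p q) (h2 : M.Reach q r) : M.Reach p r := by
  obtain ⟨u, hu⟩ := h1
  obtain ⟨v, hv⟩ := h2
  exact ⟨u ++ v, by rw [DFA.evalFrom_of_append, hu, hv]⟩

private lemma self_mem_component {α σ : Type*} (M : DFA α σ) (p : σ) :
    p ∈ M.component p := ⟨⟨[], rfl⟩, ⟨[], rfl⟩⟩

/-- Any state in a nontrivial component has a nonempty loop. -/
private lemma exists_loop {α σ : Type*} (M : DFA α σ) {q p : σ} (hp : p ∈ M.component q)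
    (hnt : ¬ M.TrivialComponent (M.component q)) :
    ∃ x : List α, x ≠ [] ∧ M.evalFrom p x = p := by
  by_cases h : ∃ r ∈ M.component q, r ≠ p
  · obtain ⟨r, hr, hrp⟩ := h
    obtain ⟨u, hu⟩ := reach_trans hp.1 hr.2
    obtain ⟨v, hv⟩ := reach_trans hr.1 hp.2
    refine ⟨u ++ v, ?_, by rw [DFA.evalFrom_of_append, hu, hv]⟩
    intro h0
    rcases List.append_eq_nil_iff.1 h0 with ⟨hu0, _⟩
    subst hu0
    exact hrp hu.symm
  · push_neg at h
    have hC : M.component q = {p} := by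
      apply Set.eq_singleton_iff_unique_mem.2
      exact ⟨hp, h⟩
    have : ¬ ∀ a : α, M.step p a ≠ p := fun hl => hnt ⟨p, hC, hl⟩
    push_neg at this
    obtain ⟨a, ha⟩ := this
    exact ⟨[a], by simp, ha⟩

private lemma exists_iterate_lt {σ : Type*} [Finite σ] (f : σ → σ) (r : σ) :
    ∃ i k, 0 < k ∧ f^[k] (f^[i] r) = f^[i] r := by
  obtain ⟨i, j, hne, heq⟩ := Finite.exists_ne_map_eq_of_infinite (fun n : ℕ => f^[n] r)
  rcases hne.lt_or_gt with h | h
  · refine ⟨i, j - i, by omega, ?_⟩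
    rw [← Function.iterate_add_apply]
    simpa [Nat.sub_add_cancel h.le] using heq.symm
  · refine ⟨j, i - j, by omega, ?_⟩
    rw [← Function.iterate_add_apply]
    simpa [Nat.sub_add_cancel h.le] using heq

private lemma iterate_cancel {σ : Type*} {f : σ → σ} {X : Set σ}
    (hmaps : Set.MapsTo f X X) (hinj : Set.InjOn f X) :
    ∀ n, ∀ x ∈ X, ∀ y ∈ X, f^[n] x = f^[n] y → x = y := by
  intro n
  induction n with
  | zero => intro x _ y _ h; simpa using h
  | succ n ih =>
    intro x hx y hy h
    apply ih x hx y hy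
    rw [Function.iterate_succ_apply', Function.iterate_succ_apply'] at h
    exact hinj (hmaps.iterate n hx) (hmaps.iterate n hy) h

private lemma exists_pos_iterate_fixed {σ : Type*} [Finite σ] {f : σ → σ} {X : Set σ}
    (hmaps : Set.MapsTo f X X) (hinj : Set.InjOn f X) {p : σ} (hp : p ∈ X) :
    ∃ k, 0 < k ∧ f^[k] p = p := by
  obtain ⟨i, k, hk, heq⟩ := exists_iterate_lt f p
  refine ⟨k, hk, iterate_cancel hmaps hinj i _ ((hmaps.iterate k) hp) p hp ?_⟩
  rw [← Function.iterate_add_apply, Nat.add_comm, Function.iterate_add_apply]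
  exact heq

private lemma sink_evalFrom {α σ : Type*} (M : DFA α σ) {C : Set σ} (h : M.IsSink C)
    {p : σ} (hp : p ∈ C) (w : List α) : M.evalFrom p w ∈ C := by
  induction w generalizing p with
  | nil => exact hp
  | cons a t ih => exact ih (h p hp a)

/-- A connected, reduced finite automaton avoids the pattern `P_g` iff every
nontrivial component is a sink and, for every nonempty word `u` and every sink
component `C`, the transformation of `C` induced by `u` is nonpermutational
(every nonempty subset of `C` mapped onto itself is a singleton). -/
theorem avoids_Pg_iff_sinks_nonpermutational {α σ : Type*} [Finite α] [Finite σ]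
    (M : DFA α σ) (hred : M.Reduced) :
    (¬ M.AdmitsPg) ↔
      ((∀ q : σ, ¬ M.TrivialComponent (M.component q) → M.IsSink (M.component q)) ∧
       (∀ u : List α, u ≠ [] → ∀ q : σ, M.IsSink (M.component q) →
         ∀ X : Set σ, X ⊆ M.component q → X.Nonempty →
           (fun p => M.evalFrom p u) '' X = X → X.ncard = 1)) := by
  clear hred
  constructor
  · intro hA
    constructor
    · -- every nontrivial component is a sink
      intro q hnt p hp a
      by_contra hr
      obtain ⟨x, hx, hpx⟩ := exists_loop M hp hnt
      set f : σ → σ := fun s => M.evalFrom s x with hf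
      set r : σ := M.step p a with hrdef
      obtain ⟨i, k, hk, heq⟩ := exists_iterate_lt f r
      set s : σ := f^[i] r with hs
      have hreach_rs : M.evalFrom r (wpow x i) = s := by
        rw [evalFrom_wpow]
      by_cases hsp : s = p
      · -- then r is in the component, contradiction
        apply hr
        have hrp : M.Reach r p := ⟨wpow x i, by rw [hreach_rs, hsp]⟩
        have hpr : M.Reach p r := ⟨[a], rfl⟩
        exact ⟨reach_trans hrp hp.1, reach_trans hp.2 hpr⟩
      · -- pattern P_g with states p and s
        apply hA
        refine ⟨p, s, wpow x k, [a] ++ wpow x i, fun h => hsp h.symm,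
          wpow_ne_nil hx hk, by simp, ?_, ?_, ?_⟩
        · rw [evalFrom_wpow]
          exact Function.iterate_fixed hpx k
        · rw [evalFrom_wpow]
          exact heq
        · show M.evalFrom (M.evalFrom p [a]) (wpow x i) = s
          exact hreach_rs
    · -- nonpermutational on sinks
      intro u hu q _hsink X hXC ⟨p0, hp0⟩ himg
      set f : σ → σ := fun s => M.evalFrom s u with hf
      have hfin : X.Finite := Set.toFinite X
      have hmaps : Set.MapsTo f X X := Set.mapsTo_iff_image_subset.2 (le_of_eq himg)
      have hsurj : Set.SurjOn f X X := le_of_eq himg.symm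
      have hinj : Set.InjOn f X :=
        ((hfin.surjOn_iff_bijOn_of_mapsTo hmaps).1 hsurj).injOn
      have key : ∀ p1 ∈ X, ∀ p2 ∈ X, p1 = p2 := by
        intro p1 h1 p2 h2
        by_contra hne
        obtain ⟨k, hk, hk'⟩ := exists_pos_iterate_fixed hmaps hinj h1
        obtain ⟨m, hm, hm'⟩ := exists_pos_iterate_fixed hmaps hinj h2
        have l1 : f^[k * m] p1 = p1 := by
          rw [Function.iterate_mul]
          exact Function.iterate_fixed hk' m
        have l2 : f^[k * m] p2 = p2 := by
          rw [Nat.mul_comm, Function.iterate_mul]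
          exact Function.iterate_fixed hm' k
        obtain ⟨y, hy⟩ := reach_trans (hXC h1).1 (hXC h2).2
        have hy0 : y ≠ [] := by
          intro h0
          subst h0
          exact hne hy
        apply hA
        refine ⟨p1, p2, wpow u (k * m), y, hne,
          wpow_ne_nil hu (Nat.mul_pos hk hm), hy0, ?_, ?_, hy⟩
        · rw [evalFrom_wpow]; exact l1
        · rw [evalFrom_wpow]; exact l2
      rw [Set.ncard_eq_one]
      exact ⟨p0, Set.eq_singleton_iff_unique_mem.2 ⟨hp0, fun x hx => key x hx p0 hp0⟩⟩
  · rintro ⟨h1, h2⟩ ⟨p, q, x, y, hpq, hx, hy, hpx, hqx, hpy⟩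
    have hpC : p ∈ M.component p := self_mem_component M p
    have hnt : ¬ M.TrivialComponent (M.component p) := by
      rintro ⟨p', hC, hloop⟩
      have hp' : p = p' := by
        have := hC ▸ hpC
        simpa using this
      subst hp'
      cases x with
      | nil => exact hx rfl
      | cons a t =>
        have hstep : M.step p a ∈ M.component p := by
          refine ⟨⟨t, hpx⟩, ⟨[a], rfl⟩⟩
        rw [hC] at hstep
        exact hloop a hstep
    have hsink := h1 p hnt
    have hqC : q ∈ M.component p := by
      rw [← hpy]
      exact sink_evalFrom M hsink hpC y
    have himg : (fun s => M.evalFrom s x) '' {p, q} = {p, q} := by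
      rw [Set.image_pair, hpx, hqx]
    have hsub : ({p, q} : Set σ) ⊆ M.component p := by
      rintro r (rfl | rfl)
      · exact hpC
      · exact hqC
    have h2' := h2 x hx p hsink {p, q} hsub ⟨p, Or.inl rfl⟩ himg
    rw [Set.ncard_pair hpq] at h2'
    omega
end

section
/- Let A = (Q, Σ, δ, q₀, F) be a finite deterministic automaton that is connected and reduced. Then the language L(A) recognized by A is definite if and only if A avoids the pattern P_d, i.e., there do NOT exist distinct states p, q ∈ Q and a nonempty word x ∈ Σ⁺ with δ*(p,x) = p and δ*(q,x) = q. -/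
/-- `M` admits the pattern `P_d`: two distinct states `p, q` and a nonempty
word `x` with `px = p` and `qx = q`. -/
def DFA.AdmitsPd {α σ : Type*} (M : DFA α σ) : Prop :=
  ∃ (p q : σ) (x : List α), p ≠ q ∧ x ≠ [] ∧
    M.evalFrom p x = p ∧ M.evalFrom q x = q

/-- A language is definite if membership only depends on the suffix of
length `k`, for some constant `k`. -/
def Definite {α : Type*} (L : Language α) : Prop :=
  ∃ k : ℕ, ∀ x y : List α, y.length = k → ((x ++ y) ∈ L ↔ y ∈ L)

private lemma replicate_fix {α σ : Type*} (M : DFA α σ) (p : σ) (x : List α)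
    (hx : M.evalFrom p x = p) (n : ℕ) :
    M.evalFrom p (List.replicate n x).flatten = p := by
  induction n with
  | zero => rfl
  | succ n ih =>
      rw [List.replicate_succ, List.flatten_cons, DFA.evalFrom_of_append, hx, ih]

/-- If `M` avoids `P_d`, long words synchronize all states. -/
private lemma sync {α σ : Type*} [Finite σ] (M : DFA α σ) (h : ¬ M.AdmitsPd)
    (p q : σ) (y : List α) (hy : Nat.card (σ × σ) ≤ y.length) :
    M.evalFrom p y = M.evalFrom q y := by
  have : Fintype σ := Fintype.ofFinite σ
  set k := Nat.card (σ × σ) with hk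
  have hcard : Fintype.card (σ × σ) = k := by simp [hk, Nat.card_eq_fintype_card]
  set g : Fin (k + 1) → σ × σ :=
    fun i => (M.evalFrom p (y.take i), M.evalFrom q (y.take i)) with hg
  obtain ⟨i, j, hne, heq⟩ := Fintype.exists_ne_map_eq_of_card_lt g (by simp [hcard])
  wlog hij : (i : ℕ) < (j : ℕ) generalizing i j
  · exact this j i hne.symm heq.symm
      (lt_of_le_of_ne (not_lt.mp hij) (fun hc => hne (Fin.ext hc.symm)))
  -- the segment between positions i and j fixes both intermediate states
  set z := (y.take j).drop i with hz
  have hji : (j : ℕ) ≤ y.length := le_trans (Nat.lt_succ_iff.mp j.isLt) hy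
  have hti : y.take (i : ℕ) = (y.take (j : ℕ)).take (i : ℕ) := by
    rw [List.take_take, min_eq_left hij.le]
  have hsplit : y.take (j : ℕ) = y.take (i : ℕ) ++ z := by
    rw [hti, hz]; exact (List.take_append_drop _ _).symm
  have hzne : z ≠ [] := by
    have : z.length = (j : ℕ) - (i : ℕ) := by
      simp [hz, min_eq_left hji]
    intro hc
    rw [hc] at this
    simp at this
    omega
  have hpz : M.evalFrom (M.evalFrom p (y.take (i : ℕ))) z
      = M.evalFrom p (y.take (i : ℕ)) := by
    rw [← DFA.evalFrom_of_append, ← hsplit]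
    exact (congrArg Prod.fst heq).symm
  have hqz : M.evalFrom (M.evalFrom q (y.take (i : ℕ))) z
      = M.evalFrom q (y.take (i : ℕ)) := by
    rw [← DFA.evalFrom_of_append, ← hsplit]
    exact (congrArg Prod.snd heq).symm
  have heq' : M.evalFrom p (y.take (i : ℕ)) = M.evalFrom q (y.take (i : ℕ)) := by
    by_contra hc
    exact h ⟨_, _, z, hc, hzne, hpz, hqz⟩
  calc M.evalFrom p y = M.evalFrom p (y.take (i : ℕ) ++ y.drop (i : ℕ)) := by
        rw [List.take_append_drop]
    _ = M.evalFrom (M.evalFrom p (y.take (i : ℕ))) (y.drop (i : ℕ)) :=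
        M.evalFrom_of_append _ _ _
    _ = M.evalFrom (M.evalFrom q (y.take (i : ℕ))) (y.drop (i : ℕ)) := by rw [heq']
    _ = M.evalFrom q (y.take (i : ℕ) ++ y.drop (i : ℕ)) :=
        (M.evalFrom_of_append _ _ _).symm
    _ = M.evalFrom q y := by rw [List.take_append_drop]

/-- A connected, reduced finite automaton recognizes a definite language iff
it avoids the pattern `P_d`. -/
theorem definite_iff_avoids_Pd {α σ : Type*} [Finite α] [Finite σ]
    (M : DFA α σ) (hred : M.Reduced) :
    Definite M.accepts ↔ ¬ M.AdmitsPd := by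
  constructor
  · rintro ⟨k, hk⟩ ⟨p, q, x, hpq, hxne, hpx, hqx⟩
    obtain ⟨u, hu⟩ := hred.2 p q hpq
    obtain ⟨wp, hwp⟩ := hred.1 p
    obtain ⟨wq, hwq⟩ := hred.1 q
    set z := (List.replicate k x).flatten ++ u with hzdef
    have hzlen : k ≤ z.length := by
      have hx1 : 1 ≤ x.length := List.length_pos_iff.mpr hxne
      have : k ≤ k * x.length := Nat.le_mul_of_pos_right k hx1
      simp only [hzdef, List.length_append, List.length_flatten]
      calc k ≤ k * x.length := this
        _ = ((List.replicate k x).map List.length).sum := by simp [List.map_replicate]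
        _ ≤ _ := by simp
    set y := z.drop (z.length - k) with hy
    have hylen : y.length = k := by
      simp [hy, Nat.sub_sub_self hzlen]
    have hztake : z = z.take (z.length - k) ++ y := (List.take_append_drop _ _).symm
    have hpmem : ((wp ++ z) ∈ M.accepts) ↔ (M.evalFrom p u ∈ M.accept) := by
      rw [DFA.mem_accepts, DFA.eval, DFA.evalFrom_of_append, hwp, hzdef,
        DFA.evalFrom_of_append, replicate_fix M p x hpx]
    have hqmem : ((wq ++ z) ∈ M.accepts) ↔ (M.evalFrom q u ∈ M.accept) := by
      rw [DFA.mem_accepts, DFA.eval, DFA.evalFrom_of_append, hwq, hzdef,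
        DFA.evalFrom_of_append, replicate_fix M q x hqx]
    have h1 : (wp ++ z) ∈ M.accepts ↔ y ∈ M.accepts := by
      conv_lhs => rw [hztake, ← List.append_assoc]
      exact hk _ _ hylen
    have h2 : (wq ++ z) ∈ M.accepts ↔ y ∈ M.accepts := by
      conv_lhs => rw [hztake, ← List.append_assoc]
      exact hk _ _ hylen
    exact hu (by rw [← hpmem, ← hqmem, h1, h2])
  · intro h
    refine ⟨Nat.card (σ × σ), fun x y hylen => ?_⟩
    have := sync M h (M.evalFrom M.start x) M.start y (by rw [hylen])
    rw [DFA.mem_accepts, DFA.mem_accepts]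
    show M.evalFrom M.start (x ++ y) ∈ M.accept ↔ M.evalFrom M.start y ∈ M.accept
    rw [DFA.evalFrom_of_append, this]
end
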